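/- arXiv:1907.02447 — 2 statements merged into one kernel-verified Lean document; each statement's English description precedes it below -/
import Mathlib

section
/- Let n ∈ (ℕ_{>0})^d, let g be a modulation on J_n, let f : ℝ^d → ℝ be integrable on [0,2π)^d and 2π-periodic in each coordinate, and let (X_s)_{s∈J_n} be real square-integrable mean-zero random variables with E[X_s X_t] = ∫_{[0,2π)^d} f(ω) exp(i ω·(t−s)) dω for all s, t ∈ J_n. Then for every ω ∈ ℝ^d, E[I_n(ω)] = ∫_{[0,2π)^d} f(ω − ω') F_n(ω') dω', i.e. the expected periodogram is the convolution of f with the modified Fejér kernel. -/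
open MeasureTheory Real Filter Topology BigOperators NNReal

noncomputable section

namespace DSW

/-- The rectangular grid `J_n ⊆ ℤ^d`. -/
def grid {d : ℕ} (n : Fin d → ℕ+) : Finset (Fin d → ℤ) :=
  Fintype.piFinset fun i => Finset.Icc 0 ((n i : ℤ) - 1)

/-- `|n| = ∏ n_i` as a real number. -/
def gridSize {d : ℕ} (n : Fin d → ℕ+) : ℝ := ∏ i, ((n i : ℕ) : ℝ)

/-- A modulation on `J_n`: takes values in `[0,1]`, vanishes off the grid,
and is not identically zero. -/
def IsModulation {d : ℕ} (n : Fin d → ℕ+) (g : (Fin d → ℤ) → ℝ) : Prop :=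
  (∀ s, 0 ≤ g s ∧ g s ≤ 1) ∧ (∀ s, s ∉ grid n → g s = 0) ∧ ∃ s, g s ≠ 0

/-- `c_{g,n}(u) = (∑_{s∈ℤ^d} g_s g_{s+u}) / (∑_{s∈ℤ^d} g_s²)`. -/
def cg {d : ℕ} (g : (Fin d → ℤ) → ℝ) (u : Fin d → ℤ) : ℝ :=
  (∑' s : Fin d → ℤ, g s * g (s + u)) / ∑' s : Fin d → ℤ, g s ^ 2

/-- `ω · s` for `ω ∈ ℝ^d`, `s ∈ ℤ^d`. -/
def dotZ {d : ℕ} (ω : Fin d → ℝ) (s : Fin d → ℤ) : ℝ := ∑ i, ω i * (s i : ℝ)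

/-- The modulated periodogram `I_n(ω)`. -/
def periodogram {d : ℕ} (n : Fin d → ℕ+) (g X : (Fin d → ℤ) → ℝ) (ω : Fin d → ℝ) : ℝ :=
  ((2 * π) ^ d)⁻¹ * (∑' s : Fin d → ℤ, g s ^ 2)⁻¹ *
    ‖∑ s ∈ grid n, ((g s * X s : ℝ) : ℂ) *
      Complex.exp (-(Complex.I * (dotZ ω s : ℂ)))‖ ^ 2

/-- The modified Fejér kernel `F_n(ω)`. -/
def fejer {d : ℕ} (n : Fin d → ℕ+) (g : (Fin d → ℤ) → ℝ) (ω : Fin d → ℝ) : ℝ :=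
  ((2 * π) ^ d)⁻¹ * (∑' s : Fin d → ℤ, g s ^ 2)⁻¹ *
    ‖∑ s ∈ grid n, (g s : ℂ) * Complex.exp (Complex.I * (dotZ ω s : ℂ))‖ ^ 2

/-- The torus `[0, 2π)^d`. -/
def torus (d : ℕ) : Set (Fin d → ℝ) := Set.univ.pi fun _ => Set.Ico 0 (2 * π)

/-- `2π`-periodicity in each coordinate. -/
def Periodic2Pi {d : ℕ} (f : (Fin d → ℝ) → ℝ) : Prop :=
  ∀ (ω : Fin d → ℝ) (u : Fin d → ℤ), f (fun i => ω i + 2 * π * (u i : ℝ)) = f ω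

/-- The expected periodogram `Ī_n(ω; f) = ∫_{[0,2π)^d} f(ω-λ) F_n(λ) dλ`. -/
def expPeriodogram {d : ℕ} (n : Fin d → ℕ+) (g : (Fin d → ℤ) → ℝ)
    (f : (Fin d → ℝ) → ℝ) (ω : Fin d → ℝ) : ℝ :=
  ∫ lam in torus d, f (ω - lam) * fejer n g lam

/-- The Fourier grid `Ω_n`. -/
def fourierGrid {d : ℕ} (n : Fin d → ℕ+) : Finset (Fin d → ℝ) :=
  (Fintype.piFinset fun i => Finset.range (n i : ℕ)).image
    fun k i => 2 * π * (k i : ℝ) / ((n i : ℕ) : ℝ)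

/-- A family of real random variables is jointly Gaussian and centered if every finite
real linear combination has a (possibly degenerate) centered Gaussian distribution. -/
def IsJointlyGaussianCentered {Ω : Type*} [MeasurableSpace Ω] (μ : Measure Ω)
    {S : Type*} (X : S → Ω → ℝ) : Prop :=
  ∀ (T : Finset S) (a : S → ℝ), ∃ v : ℝ≥0,
    Measure.map (fun x => ∑ s ∈ T, a s * X s x) μ = ProbabilityTheory.gaussianReal 0 v


section AuxFD
open Submodule

variable {d : ℕ}

def tpB (d : ℕ) : Module.Basis (Fin d) ℝ (Fin d → ℝ) :=
  (Pi.basisFun ℝ (Fin d)).unitsSMul (fun _ => Units.mk0 (2 * π) (by positivity))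

theorem torus_eq : torus d = ZSpan.fundamentalDomain (tpB d) := by
  ext x
  simp only [torus, ZSpan.fundamentalDomain, Set.mem_pi, Set.mem_univ, forall_true_left,
    Set.mem_setOf_eq, tpB, Module.Basis.repr_unitsSMul, Pi.basisFun_repr, Units.smul_def, smul_eq_mul,
    Set.mem_Ico, Units.val_inv_eq_inv_val, Units.val_mk0]
  have h : (0:ℝ) < 2 * π := by positivity
  refine forall_congr' fun i => ?_
  rw [inv_mul_eq_div, div_lt_one h, le_div_iff₀ h, zero_mul]

instance cntSpan (d : ℕ) : Countable (span ℤ (Set.range (tpB d))) := inferInstance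

abbrev latt (d : ℕ) : AddSubgroup (Fin d → ℝ) := (span ℤ (Set.range (tpB d))).toAddSubgroup

instance cntLatt (d : ℕ) : Countable (latt d) :=
  inferInstanceAs (Countable (span ℤ (Set.range (tpB d))))

theorem tfd' : IsAddFundamentalDomain (latt d) (torus d) volume := by
  rw [torus_eq]; exact ZSpan.isAddFundamentalDomain' (tpB d) volume

theorem lat_mem {v : Fin d → ℝ} (hv : v ∈ span ℤ (Set.range (tpB d))) :
    ∃ u : Fin d → ℤ, v = fun i => 2 * π * (u i : ℝ) := by
  induction hv using Submodule.span_induction with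
  | mem x hx =>
      obtain ⟨i, rfl⟩ := hx
      refine ⟨fun j => if j = i then 1 else 0, ?_⟩
      funext j
      simp only [tpB, Module.Basis.unitsSMul_apply, Units.smul_def, Units.val_mk0,
        Pi.basisFun_apply, Pi.smul_apply, smul_eq_mul, Pi.single_apply]
      by_cases h : j = i <;> simp [h]
  | zero => exact ⟨0, by funext j; simp⟩
  | add x y _ _ hx hy =>
      obtain ⟨u, rfl⟩ := hx; obtain ⟨w, rfl⟩ := hy
      exact ⟨u + w, by funext j; push_cast; simp; ring⟩
  | smul r x _ hx =>
      obtain ⟨u, rfl⟩ := hx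
      refine ⟨r • u, ?_⟩
      funext j
      simp [zsmul_eq_mul]
      ring

theorem refl_fd (ω : Fin d → ℝ) :
    IsAddFundamentalDomain (latt d)
      ((fun y => ω - y) ⁻¹' torus d) volume := by
  apply IsAddFundamentalDomain.mk'
  · refine ((measurable_const.sub measurable_id) ?_).nullMeasurableSet
    exact MeasurableSet.univ_pi fun i => measurableSet_Ico
  · intro x
    obtain ⟨w, hw, hw'⟩ := ZSpan.exist_unique_vadd_mem_fundamentalDomain (tpB d) (ω - x)
    rw [← torus_eq] at hw hw'
    have key : ∀ v : latt d, (v +ᵥ x ∈ (fun y => ω - y) ⁻¹' torus d) ↔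
        ((⟨-(v : Fin d → ℝ), neg_mem v.2⟩ : span ℤ (Set.range (tpB d))) +ᵥ (ω - x)
          ∈ torus d) := by
      intro v
      have h0 : v +ᵥ x = (v : Fin d → ℝ) + x := rfl
      have h1 : (⟨-(v : Fin d → ℝ), neg_mem v.2⟩ : span ℤ (Set.range (tpB d))) +ᵥ (ω - x)
          = -(v : Fin d → ℝ) + (ω - x) := rfl
      have h2 : ω - ((v : Fin d → ℝ) + x) = -(v : Fin d → ℝ) + (ω - x) := by abel
      simp only [Set.mem_preimage, h0, h1, h2]
    refine ⟨⟨-(w : Fin d → ℝ), neg_mem w.2⟩, ?_, fun v hv => ?_⟩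
    · have := (key ⟨-(w : Fin d → ℝ), neg_mem w.2⟩).mpr
      refine this ?_
      convert hw using 2
      ext; simp
    · have hv' := (key v).mp hv
      have := hw' _ hv'
      have h2 : -(v : Fin d → ℝ) = (w : Fin d → ℝ) := congrArg Subtype.val this
      ext
      simp [← h2]

theorem exch (ω : Fin d → ℝ) (H : (Fin d → ℝ) → ℝ)
    (hH : ∀ (v : latt d) (x), H ((v : Fin d → ℝ) + x) = H x) :
    ∫ x in (fun y => ω - y) ⁻¹' torus d, H x = ∫ x in torus d, H x :=
  (refl_fd ω).setIntegral_eq tfd' (f := H) hH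

theorem integral_sub_comm (f : (Fin d → ℝ) → ℝ) (ω : Fin d → ℝ) :
    ∫ x, f (ω - x) = ∫ x, f x := by
  have h1 : ∫ x : Fin d → ℝ, f (ω + x) = ∫ x, f x := integral_add_left_eq_self f ω
  have h2 := integral_neg_eq_self (fun x : Fin d → ℝ => f (ω + x)) volume
  simp only [← sub_eq_add_neg] at h2
  exact h2.trans h1

end AuxFD

section AuxFejer

variable {d : ℕ}

theorem dotZ_shift (x : Fin d → ℝ) (u s : Fin d → ℤ) :
    dotZ (fun i => x i + 2 * π * (u i : ℝ)) s
      = dotZ x s + 2 * π * ((∑ i, u i * s i : ℤ) : ℝ) := by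
  simp only [dotZ, add_mul, Finset.sum_add_distrib]
  congr 1
  push_cast
  rw [Finset.mul_sum]
  exact Finset.sum_congr rfl fun i _ => by ring

theorem exp_I_dotZ_shift (x : Fin d → ℝ) (u s : Fin d → ℤ) :
    Complex.exp (Complex.I * (dotZ (fun i => x i + 2 * π * (u i : ℝ)) s : ℂ))
      = Complex.exp (Complex.I * (dotZ x s : ℂ)) := by
  rw [dotZ_shift, Complex.ofReal_add, mul_add, Complex.exp_add,
    show Complex.I * ((2 * π * ((∑ i, u i * s i : ℤ) : ℝ) : ℝ) : ℂ)
      = ((∑ i, u i * s i : ℤ) : ℂ) * (2 * π * Complex.I) by push_cast; ring,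
    Complex.exp_int_mul_two_pi_mul_I, mul_one]

theorem fejer_shift (n : Fin d → ℕ+) (g : (Fin d → ℤ) → ℝ) (x : Fin d → ℝ) (u : Fin d → ℤ) :
    fejer n g (fun i => x i + 2 * π * (u i : ℝ)) = fejer n g x := by
  unfold fejer
  congr 3
  exact Finset.sum_congr rfl fun s _ => by rw [exp_I_dotZ_shift]

theorem dotZ_neg_left (x : Fin d → ℝ) (s : Fin d → ℤ) : dotZ (-x) s = -dotZ x s := by
  simp [dotZ, Finset.sum_neg_distrib]

theorem fejer_neg (n : Fin d → ℕ+) (g : (Fin d → ℤ) → ℝ) (x : Fin d → ℝ) :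
    fejer n g (-x) = fejer n g x := by
  unfold fejer
  have : (∑ s ∈ grid n, (g s : ℂ) * Complex.exp (Complex.I * (dotZ (-x) s : ℂ)))
      = (starRingEnd ℂ) (∑ s ∈ grid n, (g s : ℂ) * Complex.exp (Complex.I * (dotZ x s : ℂ))) := by
    rw [map_sum]
    refine Finset.sum_congr rfl fun s _ => ?_
    rw [map_mul, Complex.conj_ofReal, ← Complex.exp_conj]
    congr 1
    simp [dotZ_neg_left, map_mul, Complex.conj_I, Complex.conj_ofReal]
  rw [this, Complex.norm_conj]

end AuxFejer

section AuxCore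

variable {d : ℕ}

theorem dotZ_sub_left (x y : Fin d → ℝ) (s : Fin d → ℤ) :
    dotZ (x - y) s = dotZ x s - dotZ y s := by
  simp only [dotZ, Pi.sub_apply, sub_mul, Finset.sum_sub_distrib]

theorem dotZ_sub_right (x : Fin d → ℝ) (s t : Fin d → ℤ) :
    dotZ x (s - t) = dotZ x s - dotZ x t := by
  simp only [dotZ, Pi.sub_apply, Int.cast_sub, mul_sub, Finset.sum_sub_distrib]

theorem exp_merge (θ₁ θ₂ : ℝ) :
    Complex.exp (-(Complex.I * (θ₁ : ℂ))) * Complex.exp (Complex.I * (θ₂ : ℂ))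
      = Complex.exp (Complex.I * ((θ₂ - θ₁ : ℝ) : ℂ)) := by
  rw [← Complex.exp_add]; congr 1; push_cast; ring

theorem exp_split (θ₁ θ₂ : ℝ) :
    Complex.exp (Complex.I * ((θ₁ - θ₂ : ℝ) : ℂ))
      = Complex.exp (Complex.I * (θ₁ : ℂ)) * Complex.exp (-(Complex.I * (θ₂ : ℂ))) := by
  rw [← Complex.exp_add]; congr 1; push_cast; ring

theorem conj_exp_I (θ : ℝ) :
    (starRingEnd ℂ) (Complex.exp (Complex.I * (θ : ℂ)))
      = Complex.exp (-(Complex.I * (θ : ℂ))) := by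
  rw [← Complex.exp_conj]; congr 1
  simp [map_mul, Complex.conj_I, Complex.conj_ofReal]

theorem conj_exp_neg_I (θ : ℝ) :
    (starRingEnd ℂ) (Complex.exp (-(Complex.I * (θ : ℂ))))
      = Complex.exp (Complex.I * (θ : ℂ)) := by
  rw [← Complex.exp_conj]; congr 1
  simp [map_mul, Complex.conj_I, Complex.conj_ofReal]

theorem step1 (n : Fin d → ℕ+) (g : (Fin d → ℤ) → ℝ)
    (f : (Fin d → ℝ) → ℝ) (hfint : IntegrableOn f (torus d))
    {Ω : Type*} [MeasurableSpace Ω] (μ : Measure Ω) [IsProbabilityMeasure μ]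
    (X : (Fin d → ℤ) → Ω → ℝ)
    (hX2 : ∀ s ∈ grid n, MemLp (X s) 2 μ)
    (hcov : ∀ s ∈ grid n, ∀ t ∈ grid n,
      ((∫ x, X s x * X t x ∂μ : ℝ) : ℂ) =
        ∫ ω in torus d, (f ω : ℂ) * Complex.exp (Complex.I * (dotZ ω (t - s) : ℂ)))
    (ω : Fin d → ℝ) :
    ∫ x, periodogram n g (fun s => X s x) ω ∂μ
      = ∫ lam in torus d, f lam * fejer n g (lam - ω) := by
  set J := grid n with hJ
  set C : ℝ := ((2 * π : ℝ) ^ d)⁻¹ * (∑' s : Fin d → ℤ, g s ^ 2)⁻¹ with hC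
  set a : (Fin d → ℤ) → ℂ :=
    fun s => (g s : ℂ) * Complex.exp (-(Complex.I * (dotZ ω s : ℂ))) with ha
  set B : (Fin d → ℝ) → ℂ :=
    fun lam => ∑ s ∈ J, (g s : ℂ) * Complex.exp (Complex.I * (dotZ (lam - ω) s : ℂ)) with hB
  -- pointwise expansion of the periodogram
  have key1 : ∀ x, periodogram n g (fun s => X s x) ω
      = C * ∑ s ∈ J, ∑ t ∈ J,
          ((a s * (starRingEnd ℂ) (a t)).re * (X s x * X t x)) := by
    intro x
    unfold periodogram
    set z : ℂ := ∑ s ∈ J, ((g s * X s x : ℝ) : ℂ) *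
      Complex.exp (-(Complex.I * (dotZ ω s : ℂ))) with hz
    have habs : ‖z‖ ^ 2 = (z * (starRingEnd ℂ) z).re := by
      rw [Complex.mul_conj, Complex.sq_norm, Complex.ofReal_re]
    rw [habs]
    have hz2 : z = ∑ s ∈ J, a s * ((X s x : ℝ) : ℂ) := by
      refine Finset.sum_congr rfl fun s _ => ?_
      rw [ha]; push_cast; ring
    have hcz : (starRingEnd ℂ) z = ∑ t ∈ J, (starRingEnd ℂ) (a t) * ((X t x : ℝ) : ℂ) := by
      rw [hz2, map_sum]
      exact Finset.sum_congr rfl fun t _ => by rw [map_mul, Complex.conj_ofReal]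
    rw [hcz, hz2, ← hC]
    rw [Finset.sum_mul_sum J J (fun s => a s * ((X s x : ℝ) : ℂ))
        (fun t => (starRingEnd ℂ) (a t) * ((X t x : ℝ) : ℂ))]
    rw [Complex.re_sum]
    congr 1
    refine Finset.sum_congr rfl fun s _ => ?_
    rw [Complex.re_sum]
    refine Finset.sum_congr rfl fun t _ => ?_
    have : a s * ((X s x : ℝ) : ℂ) * ((starRingEnd ℂ) (a t) * ((X t x : ℝ) : ℂ))
        = (a s * (starRingEnd ℂ) (a t)) * (((X s x * X t x : ℝ)) : ℂ) := by
      push_cast; ring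
    rw [this]
    simp only [Complex.mul_re, Complex.ofReal_re, Complex.ofReal_im]
    ring
  have hint : ∀ s ∈ J, ∀ t ∈ J, Integrable (fun x => X s x * X t x) μ := by
    intro s hs t ht
    have := (hX2 s hs).smul (hX2 t ht) (r := 1)
    exact memLp_one_iff_integrable.mp (by simpa [smul_eq_mul, mul_comm] using this : MemLp (X s * X t) 1 μ)
  -- integrate
  have key2 : ∫ x, periodogram n g (fun s => X s x) ω ∂μ
      = C * ∑ s ∈ J, ∑ t ∈ J,
          ((a s * (starRingEnd ℂ) (a t)).re * ∫ x, X s x * X t x ∂μ) := by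
    simp_rw [key1]
    rw [integral_const_mul]
    congr 1
    rw [integral_finset_sum _ (fun s hs =>
      integrable_finset_sum _ fun t ht => ((hint s hs t ht).const_mul _))]
    refine Finset.sum_congr rfl fun s hs => ?_
    rw [integral_finset_sum _ (fun t ht => (hint s hs t ht).const_mul _)]
    exact Finset.sum_congr rfl fun t ht => integral_const_mul _ _
  rw [key2]
  -- turn into a complex double sum
  have key3 : ∑ s ∈ J, ∑ t ∈ J,
      ((a s * (starRingEnd ℂ) (a t)).re * ∫ x, X s x * X t x ∂μ)
      = (∑ s ∈ J, ∑ t ∈ J,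
          (a s * (starRingEnd ℂ) (a t)) * ((∫ x, X s x * X t x ∂μ : ℝ) : ℂ)).re := by
    rw [Complex.re_sum]
    refine Finset.sum_congr rfl fun s _ => ?_
    rw [Complex.re_sum]
    refine Finset.sum_congr rfl fun t _ => ?_
    simp only [Complex.mul_re, Complex.ofReal_re, Complex.ofReal_im]
    ring
  rw [key3]
  -- covariance identity
  have key4 : ∀ s ∈ J, ∀ t ∈ J, ((∫ x, X s x * X t x ∂μ : ℝ) : ℂ)
      = ∫ lam in torus d, (f lam : ℂ)
          * Complex.exp (Complex.I * (dotZ lam (s - t) : ℂ)) := by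
    intro s hs t ht
    have h1 : (∫ x, X s x * X t x ∂μ) = ∫ x, X t x * X s x ∂μ := by
      simp_rw [mul_comm]
    rw [h1]
    exact hcov t ht s hs
  -- integrability of each summand
  have key5 : ∀ u : Fin d → ℤ, IntegrableOn
      (fun lam => (f lam : ℂ) * Complex.exp (Complex.I * (dotZ lam u : ℂ)))
      (torus d) := by
    intro u
    have hdot : Continuous fun lam : Fin d → ℝ => dotZ lam u :=
      continuous_finset_sum _ fun i _ => (continuous_apply i).mul continuous_const
    have hc : Continuous fun lam : Fin d → ℝ =>
        Complex.exp (Complex.I * (dotZ lam u : ℂ)) :=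
      Complex.continuous_exp.comp (continuous_const.mul
        (Complex.continuous_ofReal.comp hdot))
    have := Integrable.bdd_mul (hfint.ofReal) hc.aestronglyMeasurable
      (c := 1) (Eventually.of_forall fun lam => by
        rw [Complex.norm_exp]
        simp [Complex.mul_re])
    simpa [mul_comm, IntegrableOn] using this
  -- pull the double sum inside the integral
  have key6 : (∑ s ∈ J, ∑ t ∈ J,
      (a s * (starRingEnd ℂ) (a t)) * ((∫ x, X s x * X t x ∂μ : ℝ) : ℂ))
      = ∫ lam in torus d, ∑ s ∈ J, ∑ t ∈ J,
          (a s * (starRingEnd ℂ) (a t)) * ((f lam : ℂ)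
            * Complex.exp (Complex.I * (dotZ lam (s - t) : ℂ))) := by
    rw [integral_finset_sum _ (fun s hs =>
      integrable_finset_sum _ fun t ht => (key5 (s - t)).const_mul _)]
    refine Finset.sum_congr rfl fun s hs => ?_
    rw [integral_finset_sum _ (fun t ht => (key5 (s - t)).const_mul _)]
    refine Finset.sum_congr rfl fun t ht => ?_
    rw [key4 s hs t ht, integral_const_mul]
  rw [key6]
  -- pointwise identification with the Fejér kernel
  have key7 : ∀ lam : Fin d → ℝ, (∑ s ∈ J, ∑ t ∈ J,
      (a s * (starRingEnd ℂ) (a t)) * ((f lam : ℂ)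
        * Complex.exp (Complex.I * (dotZ lam (s - t) : ℂ))))
      = (((f lam * Complex.normSq (B lam) : ℝ)) : ℂ) := by
    intro lam
    have hBs : ∀ s, a s * Complex.exp (Complex.I * (dotZ lam s : ℂ))
        = (g s : ℂ) * Complex.exp (Complex.I * (dotZ (lam - ω) s : ℂ)) := by
      intro s
      rw [ha, mul_assoc, exp_merge, ← dotZ_sub_left]
    have hstep : ∀ s ∈ J, ∀ t ∈ J,
        (a s * (starRingEnd ℂ) (a t)) * ((f lam : ℂ)
          * Complex.exp (Complex.I * (dotZ lam (s - t) : ℂ)))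
        = (f lam : ℂ) * ((a s * Complex.exp (Complex.I * (dotZ lam s : ℂ)))
            * (starRingEnd ℂ) (a t * Complex.exp (Complex.I * (dotZ lam t : ℂ)))) := by
      intro s _ t _
      rw [dotZ_sub_right, exp_split]
      simp only [ha, map_mul, Complex.conj_ofReal, conj_exp_I, conj_exp_neg_I]
      ring
    calc (∑ s ∈ J, ∑ t ∈ J,
        (a s * (starRingEnd ℂ) (a t)) * ((f lam : ℂ)
          * Complex.exp (Complex.I * (dotZ lam (s - t) : ℂ))))
        = (f lam : ℂ) * ((∑ s ∈ J, a s * Complex.exp (Complex.I * (dotZ lam s : ℂ)))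
            * (starRingEnd ℂ) (∑ t ∈ J, a t
              * Complex.exp (Complex.I * (dotZ lam t : ℂ)))) := by
          rw [map_sum, Finset.sum_mul_sum, Finset.mul_sum]
          refine Finset.sum_congr rfl fun s hs => ?_
          rw [Finset.mul_sum]
          exact Finset.sum_congr rfl fun t ht => hstep s hs t ht
      _ = (f lam : ℂ) * (B lam * (starRingEnd ℂ) (B lam)) := by
          rw [hB]
          congr 2
          · exact Finset.sum_congr rfl fun s _ => hBs s
          · exact congrArg _ (Finset.sum_congr rfl fun t _ => hBs t)
      _ = (((f lam * Complex.normSq (B lam) : ℝ)) : ℂ) := by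
          rw [Complex.mul_conj]; push_cast; ring
  have key8 : (∫ lam in torus d, ∑ s ∈ J, ∑ t ∈ J,
      (a s * (starRingEnd ℂ) (a t)) * ((f lam : ℂ)
        * Complex.exp (Complex.I * (dotZ lam (s - t) : ℂ))))
      = (((∫ lam in torus d, f lam * Complex.normSq (B lam) : ℝ)) : ℂ) := by
    calc (∫ lam in torus d, ∑ s ∈ J, ∑ t ∈ J,
        (a s * (starRingEnd ℂ) (a t)) * ((f lam : ℂ)
          * Complex.exp (Complex.I * (dotZ lam (s - t) : ℂ))))
        = ∫ lam in torus d, (((f lam * Complex.normSq (B lam) : ℝ)) : ℂ) :=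
          integral_congr_ae (Eventually.of_forall fun lam => key7 lam)
      _ = (((∫ lam in torus d, f lam * Complex.normSq (B lam) : ℝ)) : ℂ) := integral_ofReal
  rw [key8, Complex.ofReal_re]
  -- identify with the Fejér kernel
  have key9 : ∀ lam : Fin d → ℝ, f lam * fejer n g (lam - ω)
      = C * (f lam * Complex.normSq (B lam)) := by
    intro lam
    unfold fejer
    rw [← hC, ← hJ]
    have hBlam : (∑ s ∈ J, (g s : ℂ)
        * Complex.exp (Complex.I * (dotZ (lam - ω) s : ℂ))) = B lam := rfl
    rw [hBlam, Complex.sq_norm]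
    ring
  calc C * ∫ lam in torus d, f lam * Complex.normSq (B lam)
      = ∫ lam in torus d, C * (f lam * Complex.normSq (B lam)) := (integral_const_mul _ _).symm
    _ = ∫ lam in torus d, f lam * fejer n g (lam - ω) :=
        integral_congr_ae (Eventually.of_forall fun lam => (key9 lam).symm)


end AuxCore

/-- the expected periodogram is the convolution of the spectral density
with the modified Fejér kernel. -/
theorem expected_periodogram_eq_convolution
    {d : ℕ} (n : Fin d → ℕ+) (g : (Fin d → ℤ) → ℝ) (hg : IsModulation n g)
    (f : (Fin d → ℝ) → ℝ)
    (hfint : IntegrableOn f (torus d)) (hfper : Periodic2Pi f)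
    {Ω : Type*} [MeasurableSpace Ω] (μ : Measure Ω) [IsProbabilityMeasure μ]
    (X : (Fin d → ℤ) → Ω → ℝ)
    (hX2 : ∀ s ∈ grid n, MemLp (X s) 2 μ)
    (hmean : ∀ s ∈ grid n, ∫ x, X s x ∂μ = 0)
    (hcov : ∀ s ∈ grid n, ∀ t ∈ grid n,
      ((∫ x, X s x * X t x ∂μ : ℝ) : ℂ) =
        ∫ ω in torus d, (f ω : ℂ) * Complex.exp (Complex.I * (dotZ ω (t - s) : ℂ))) :
    ∀ ω : Fin d → ℝ,
      ∫ x, periodogram n g (fun s => X s x) ω ∂μ = expPeriodogram n g f ω := by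
  intro ω
  have hTmeas : MeasurableSet (torus d) := MeasurableSet.univ_pi fun i => measurableSet_Ico
  have hSmeas : MeasurableSet ((fun y => ω - y) ⁻¹' torus d) :=
    (measurable_const.sub measurable_id) hTmeas
  have hH : ∀ (v : latt d) (x : Fin d → ℝ),
      f (ω - ((v : Fin d → ℝ) + x)) * fejer n g ((v : Fin d → ℝ) + x)
        = f (ω - x) * fejer n g x := by
    intro v x
    obtain ⟨u, hu⟩ := lat_mem ((Submodule.mem_toAddSubgroup _).mp v.2)
    have hfe : fejer n g ((v : Fin d → ℝ) + x) = fejer n g x := by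
      have h1 : ((v : Fin d → ℝ) + x) = fun i => x i + 2 * π * (u i : ℝ) := by
        rw [hu]; funext i; simp [add_comm]
      rw [h1, fejer_shift]
    have hff : f (ω - ((v : Fin d → ℝ) + x)) = f (ω - x) := by
      have h2 : ω - ((v : Fin d → ℝ) + x) = fun i => (ω - x) i + 2 * π * ((-u) i : ℝ) := by
        rw [hu]; funext i; simp only [Pi.sub_apply, Pi.add_apply, Pi.neg_apply]
        push_cast; ring
      rw [h2, hfper (ω - x) (-u)]
    rw [hfe, hff]
  rw [step1 n g f hfint μ X hX2 hcov ω]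
  calc ∫ lam in torus d, f lam * fejer n g (lam - ω)
      = ∫ lam, (torus d).indicator (fun lam => f lam * fejer n g (lam - ω)) lam :=
        (integral_indicator hTmeas).symm
    _ = ∫ x, (torus d).indicator (fun lam => f lam * fejer n g (lam - ω)) (ω - x) :=
        (integral_sub_comm _ ω).symm
    _ = ∫ x, ((fun y => ω - y) ⁻¹' torus d).indicator
          (fun x => f (ω - x) * fejer n g x) x := by
        refine integral_congr_ae (Filter.Eventually.of_forall fun x => ?_)
        dsimp only
        by_cases hx : ω - x ∈ torus d
        · rw [Set.indicator_of_mem hx, Set.indicator_of_mem (by exact hx)]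
          have h3 : (ω - x) - ω = -x := by abel
          rw [h3, fejer_neg]
        · rw [Set.indicator_of_notMem hx, Set.indicator_of_notMem (by exact hx)]
    _ = ∫ x in (fun y => ω - y) ⁻¹' torus d, f (ω - x) * fejer n g x :=
        integral_indicator hSmeas
    _ = ∫ x in torus d, f (ω - x) * fejer n g x :=
        exch ω (fun x => f (ω - x) * fejer n g x) hH
    _ = expPeriodogram n g f ω := rfl


end DSW
end
end

section
/- Let S be a finite nonempty set, let (X_s)_{s∈S} be jointly Gaussian, centered, square-integrable real random variables, and let (a_s)_{s∈S} be real numbers. Then Var( ∑_{s∈S} a_s X_s² ) = 2 ∑_{s∈S} ∑_{t∈S} a_s a_t ( E[X_s X_t] )². -/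
open MeasureTheory Real Filter Topology BigOperators NNReal

noncomputable section

namespace DSW

section IsserlisAux

open ProbabilityTheory ENNReal

lemma integrable_pow_mul_gauss {b : ℝ} (hb : 0 < b) (n : ℕ) :
    Integrable fun x : ℝ => x ^ n * rexp (-b * x ^ 2) := by
  have h : (-1 : ℝ) < (n : ℝ) := lt_of_lt_of_le (by norm_num) (Nat.cast_nonneg n)
  simpa [Real.rpow_natCast] using integrable_rpow_mul_exp_neg_mul_sq hb h

lemma gauss_moment_step {b : ℝ} (hb : 0 < b) (n : ℕ) :
    ∫ x : ℝ, x ^ (n + 2) * rexp (-b * x ^ 2)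
      = ((n : ℝ) + 1) / (2 * b) * ∫ x : ℝ, x ^ n * rexp (-b * x ^ 2) := by
  have hb0 : b ≠ 0 := ne_of_gt hb
  have hu : ∀ x : ℝ, HasDerivAt (fun y : ℝ => y ^ (n + 1)) (((n : ℝ) + 1) * x ^ n) x := by
    intro x
    simpa using hasDerivAt_pow (n + 1) x
  have hv : ∀ x : ℝ, HasDerivAt (fun y : ℝ => -(2 * b)⁻¹ * rexp (-b * y ^ 2))
      (x * rexp (-b * x ^ 2)) x := by
    intro x
    have h1 : HasDerivAt (fun y : ℝ => -b * y ^ 2) (-b * (2 * x)) x := by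
      simpa using (hasDerivAt_pow 2 x).const_mul (-b)
    have h2 := h1.exp.const_mul (-(2 * b)⁻¹)
    refine h2.congr_deriv ?_
    field_simp
  have huv' : Integrable (fun x : ℝ => x ^ (n + 1) * (x * rexp (-b * x ^ 2))) := by
    have h : (fun x : ℝ => x ^ (n + 1) * (x * rexp (-b * x ^ 2)))
        = fun x : ℝ => x ^ (n + 2) * rexp (-b * x ^ 2) := by funext x; ring
    rw [h]; exact integrable_pow_mul_gauss hb (n + 2)
  have hu'v : Integrable (fun x : ℝ => (((n : ℝ) + 1) * x ^ n) * (-(2 * b)⁻¹ * rexp (-b * x ^ 2))) := by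
    have h : (fun x : ℝ => (((n : ℝ) + 1) * x ^ n) * (-(2 * b)⁻¹ * rexp (-b * x ^ 2)))
        = fun x : ℝ => (((n : ℝ) + 1) * -(2 * b)⁻¹) * (x ^ n * rexp (-b * x ^ 2)) := by
      funext x; ring
    rw [h]; exact (integrable_pow_mul_gauss hb n).const_mul _
  have huv : Integrable (fun x : ℝ => x ^ (n + 1) * (-(2 * b)⁻¹ * rexp (-b * x ^ 2))) := by
    have h : (fun x : ℝ => x ^ (n + 1) * (-(2 * b)⁻¹ * rexp (-b * x ^ 2)))
        = fun x : ℝ => -(2 * b)⁻¹ * (x ^ (n + 1) * rexp (-b * x ^ 2)) := by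
      funext x; ring
    rw [h]; exact (integrable_pow_mul_gauss hb (n + 1)).const_mul _
  have key := MeasureTheory.integral_mul_deriv_eq_deriv_mul_of_integrable (fun x _ => hu x) (fun x _ => hv x) huv' hu'v huv
  have lhs : ∫ x : ℝ, x ^ (n + 2) * rexp (-b * x ^ 2)
      = ∫ x : ℝ, x ^ (n + 1) * (x * rexp (-b * x ^ 2)) := by
    congr 1; funext x; ring
  rw [lhs, key]
  have h : (fun x : ℝ => (((n : ℝ) + 1) * x ^ n) * (-(2 * b)⁻¹ * rexp (-b * x ^ 2)))
      = fun x : ℝ => (((n : ℝ) + 1) * -(2 * b)⁻¹) * (x ^ n * rexp (-b * x ^ 2)) := by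
    funext x; ring
  rw [h, MeasureTheory.integral_const_mul]
  field_simp

lemma gauss_moment_two {b : ℝ} (hb : 0 < b) :
    ∫ x : ℝ, x ^ 2 * rexp (-b * x ^ 2) = 1 / (2 * b) * Real.sqrt (π / b) := by
  have h := gauss_moment_step hb 0
  simp only [pow_zero, one_mul, Nat.cast_zero, zero_add] at h
  rw [h, integral_gaussian]

lemma gauss_moment_four {b : ℝ} (hb : 0 < b) :
    ∫ x : ℝ, x ^ 4 * rexp (-b * x ^ 2) = 3 / (2 * b) * (1 / (2 * b)) * Real.sqrt (π / b) := by
  have h := gauss_moment_step hb 2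
  rw [show (4:ℕ) = 2+2 from rfl, h, gauss_moment_two hb]
  push_cast
  ring

lemma integral_gaussianReal_eq {v : ℝ≥0} (hv : v ≠ 0) (g : ℝ → ℝ) :
    ∫ x, g x ∂(gaussianReal 0 v) = ∫ x, gaussianPDFReal 0 v x * g x := by
  rw [gaussianReal_of_var_ne_zero 0 hv]
  have hmeas : Measurable fun x => Real.toNNReal (gaussianPDFReal 0 v x) :=
    (measurable_gaussianPDFReal 0 v).real_toNNReal
  rw [show (gaussianPDF 0 v) = fun x => ((Real.toNNReal (gaussianPDFReal 0 v x) : ℝ≥0) : ℝ≥0∞)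
      from rfl,
    integral_withDensity_eq_integral_smul hmeas]
  congr 1
  funext x
  rw [NNReal.smul_def, smul_eq_mul, Real.coe_toNNReal _ (gaussianPDFReal_nonneg 0 v x)]

lemma integrable_gaussianReal_of {v : ℝ≥0} (hv : v ≠ 0) {g : ℝ → ℝ}
    (hg : Integrable (fun x => gaussianPDFReal 0 v x * g x)) :
    Integrable g (gaussianReal 0 v) := by
  rw [gaussianReal_of_var_ne_zero 0 hv]
  have hmeas : Measurable fun x => Real.toNNReal (gaussianPDFReal 0 v x) :=
    (measurable_gaussianPDFReal 0 v).real_toNNReal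
  rw [show (gaussianPDF 0 v) = fun x => ((Real.toNNReal (gaussianPDFReal 0 v x) : ℝ≥0) : ℝ≥0∞)
      from rfl, integrable_withDensity_iff_integrable_smul hmeas]
  refine hg.congr (Filter.Eventually.of_forall fun x => ?_)
  show gaussianPDFReal 0 v x * g x = _ • g x
  rw [NNReal.smul_def, smul_eq_mul, Real.coe_toNNReal _ (gaussianPDFReal_nonneg 0 v x)]

lemma gaussianPDFReal_mul_pow {v : ℝ≥0} (hv : v ≠ 0) (n : ℕ) :
    (fun x : ℝ => gaussianPDFReal 0 v x * x ^ n)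
      = fun x : ℝ => (Real.sqrt (2 * π * v))⁻¹ * (x ^ n * rexp (-(2 * (v : ℝ))⁻¹ * x ^ 2)) := by
  have hv' : (0:ℝ) < v := by positivity
  funext x
  rw [gaussianPDFReal, sub_zero,
    show -x ^ 2 / (2 * (v : ℝ)) = -(2 * (v : ℝ))⁻¹ * x ^ 2 by field_simp]
  ring

lemma nnreal_pos {v : ℝ≥0} (hv : v ≠ 0) : (0:ℝ) < v := by
  exact_mod_cast lt_of_le_of_ne (zero_le (a := v)) (Ne.symm hv)

lemma integrable_pow_gaussianReal (v : ℝ≥0) (n : ℕ) :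
    Integrable (fun x : ℝ => x ^ n) (gaussianReal 0 v) := by
  by_cases hv : v = 0
  · subst hv
    rw [gaussianReal_zero_var]
    exact (integrable_const ((0:ℝ) ^ n)).congr (ae_eq_dirac (fun x : ℝ => x ^ n)).symm
  · have hv' := nnreal_pos hv
    have hb : (0:ℝ) < (2 * (v : ℝ))⁻¹ := by positivity
    apply integrable_gaussianReal_of hv
    rw [gaussianPDFReal_mul_pow hv]
    exact (integrable_pow_mul_gauss hb n).const_mul _

lemma sqrt_two_pi_v_pos {v : ℝ≥0} (hv : v ≠ 0) : (0:ℝ) < Real.sqrt (2 * π * v) := by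
  have := nnreal_pos hv
  have := Real.pi_pos
  positivity

lemma pi_div_inv {v : ℝ≥0} (hv : v ≠ 0) : π / (2 * (v:ℝ))⁻¹ = 2 * π * v := by
  have hv' := nnreal_pos hv
  field_simp

lemma integral_pow_two_gaussianReal (v : ℝ≥0) :
    ∫ x : ℝ, x ^ 2 ∂(gaussianReal 0 v) = (v : ℝ) := by
  by_cases hv : v = 0
  · subst hv
    rw [gaussianReal_zero_var, integral_dirac]
    simp
  · have hv' := nnreal_pos hv
    have hb : (0:ℝ) < (2 * (v : ℝ))⁻¹ := by positivity
    have hs := sqrt_two_pi_v_pos hv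
    rw [integral_gaussianReal_eq hv, gaussianPDFReal_mul_pow hv, integral_const_mul,
      gauss_moment_two hb, pi_div_inv hv]
    field_simp

lemma integral_pow_four_gaussianReal (v : ℝ≥0) :
    ∫ x : ℝ, x ^ 4 ∂(gaussianReal 0 v) = 3 * (v : ℝ) ^ 2 := by
  by_cases hv : v = 0
  · subst hv
    rw [gaussianReal_zero_var, integral_dirac]
    simp
  · have hv' := nnreal_pos hv
    have hb : (0:ℝ) < (2 * (v : ℝ))⁻¹ := by positivity
    have hs := sqrt_two_pi_v_pos hv
    rw [integral_gaussianReal_eq hv, gaussianPDFReal_mul_pow hv, integral_const_mul,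
      gauss_moment_four hb, pi_div_inv hv]
    field_simp

lemma moments_of_gaussian_map {Ω : Type*} [MeasurableSpace Ω] {μ : Measure Ω} {f : Ω → ℝ}
    (hf : AEMeasurable f μ) {v : ℝ≥0}
    (hmap : Measure.map f μ = gaussianReal 0 v) :
    Integrable (fun x => f x ^ 2) μ ∧ Integrable (fun x => f x ^ 4) μ ∧
      ∫ x, f x ^ 4 ∂μ = 3 * (∫ x, f x ^ 2 ∂μ) ^ 2 := by
  have hm2 : AEStronglyMeasurable (fun x : ℝ => x ^ 2) (Measure.map f μ) :=
    (measurable_id.pow_const 2).aestronglyMeasurable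
  have hm4 : AEStronglyMeasurable (fun x : ℝ => x ^ 4) (Measure.map f μ) :=
    (measurable_id.pow_const 4).aestronglyMeasurable
  have hg2 : Integrable (fun x : ℝ => x ^ 2) (Measure.map f μ) := by
    rw [hmap]; exact integrable_pow_gaussianReal v 2
  have hg4 : Integrable (fun x : ℝ => x ^ 4) (Measure.map f μ) := by
    rw [hmap]; exact integrable_pow_gaussianReal v 4
  have i2 : Integrable (fun x => f x ^ 2) μ := (integrable_map_measure hm2 hf).mp hg2
  have i4 : Integrable (fun x => f x ^ 4) μ := (integrable_map_measure hm4 hf).mp hg4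
  have e2 : ∫ x, f x ^ 2 ∂μ = (v : ℝ) := by
    rw [← integral_map hf hm2, hmap, integral_pow_two_gaussianReal]
  have e4 : ∫ x, f x ^ 4 ∂μ = 3 * (v : ℝ) ^ 2 := by
    rw [← integral_map hf hm4, hmap, integral_pow_four_gaussianReal]
  exact ⟨i2, i4, by rw [e2, e4]⟩


lemma combo {Ω : Type*} [MeasurableSpace Ω] {μ : Measure Ω} {S : Type*} [Fintype S]
    {X : S → Ω → ℝ} (hX : IsJointlyGaussianCentered μ X)
    (hm : ∀ s, AEStronglyMeasurable (X s) μ) (a : S → ℝ) :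
    Integrable (fun x => (∑ s, a s * X s x) ^ 2) μ ∧
    Integrable (fun x => (∑ s, a s * X s x) ^ 4) μ ∧
    ∫ x, (∑ s, a s * X s x) ^ 4 ∂μ = 3 * (∫ x, (∑ s, a s * X s x) ^ 2 ∂μ) ^ 2 := by
  obtain ⟨v, hv⟩ := hX Finset.univ a
  have hmeas : AEMeasurable (fun x => ∑ s, a s * X s x) μ :=
    Finset.aemeasurable_fun_sum _ fun s _ => ((hm s).aemeasurable.const_mul _)
  exact moments_of_gaussian_map hmeas hv

section Main

variable {Ω : Type*} [MeasurableSpace Ω] {μ : Measure Ω} {S : Type*} [Fintype S]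
  [DecidableEq S] {X : S → Ω → ℝ}

lemma single_pt (hm : ∀ s, AEStronglyMeasurable (X s) μ) (s : S) :
    ∀ x, ∑ w, (if w = s then (1:ℝ) else 0) * X w x = X s x := by
  intro x
  simp [ite_mul, Finset.sum_ite_eq, Finset.sum_ite_eq']

lemma quartic_single (hX : IsJointlyGaussianCentered μ X)
    (hm : ∀ s, AEStronglyMeasurable (X s) μ) (s : S) :
    Integrable (fun x => X s x ^ 4) μ ∧
      ∫ x, X s x ^ 4 ∂μ = 3 * (∫ x, X s x ^ 2 ∂μ) ^ 2 := by
  obtain ⟨-, h4, he⟩ := combo hX hm (fun w => if w = s then (1:ℝ) else 0)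
  simp only [single_pt hm s] at h4 he
  exact ⟨h4, he⟩

lemma sq_mul_sq_integrable (hX : IsJointlyGaussianCentered μ X)
    (hm : ∀ s, AEStronglyMeasurable (X s) μ) (s t : S) :
    Integrable (fun x => X s x ^ 2 * X t x ^ 2) μ := by
  have i4s := (quartic_single hX hm s).1
  have i4t := (quartic_single hX hm t).1
  have ig : Integrable (fun x => (1/2 : ℝ) * (X s x ^ 4 + X t x ^ 4)) μ :=
    (i4s.add i4t).const_mul (1/2)
  refine Integrable.mono' ig ?_ ?_
  · have h1 : AEStronglyMeasurable (fun x => X s x ^ 2) μ := by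
      simpa [sq] using (hm s).fun_mul (hm s)
    have h2 : AEStronglyMeasurable (fun x => X t x ^ 2) μ := by
      simpa [sq] using (hm t).fun_mul (hm t)
    exact h1.mul h2
  · refine Filter.Eventually.of_forall fun x => ?_
    rw [Real.norm_eq_abs, abs_of_nonneg (by positivity)]
    nlinarith [sq_nonneg (X s x ^ 2 - X t x ^ 2), sq_nonneg (X s x), sq_nonneg (X t x)]

lemma mul_integrable (hX2 : ∀ s, MemLp (X s) 2 μ) (s t : S) :
    Integrable (fun x => X s x * X t x) μ := by
  have hm : ∀ s, AEStronglyMeasurable (X s) μ := fun s => (hX2 s).1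
  have ig : Integrable (fun x => (1/2 : ℝ) * (X s x ^ 2 + X t x ^ 2)) μ :=
    ((hX2 s).integrable_sq.add (hX2 t).integrable_sq).const_mul (1/2)
  refine Integrable.mono' ig ((hm s).mul (hm t)) (Filter.Eventually.of_forall fun x => ?_)
  rw [Real.norm_eq_abs, abs_mul]
  nlinarith [sq_nonneg (|X s x| - |X t x|), sq_abs (X s x), sq_abs (X t x),
    abs_nonneg (X s x), abs_nonneg (X t x)]

lemma pair_moment [IsProbabilityMeasure μ] (hX : IsJointlyGaussianCentered μ X)
    (hX2 : ∀ s, MemLp (X s) 2 μ) (s t : S) :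
    ∫ x, X s x ^ 2 * X t x ^ 2 ∂μ
      = (∫ x, X s x ^ 2 ∂μ) * (∫ x, X t x ^ 2 ∂μ) + 2 * (∫ x, X s x * X t x ∂μ) ^ 2 := by
  have hm : ∀ s, AEStronglyMeasurable (X s) μ := fun s => (hX2 s).1
  -- sums and differences
  have hsumP : ∀ x, ∑ w, ((if w = s then (1:ℝ) else 0) + (if w = t then 1 else 0)) * X w x
      = X s x + X t x := by
    intro x
    simp [add_mul, Finset.sum_add_distrib, ite_mul, Finset.sum_ite_eq']
  have hsumM : ∀ x, ∑ w, ((if w = s then (1:ℝ) else 0) - (if w = t then 1 else 0)) * X w x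
      = X s x - X t x := by
    intro x
    simp [sub_mul, Finset.sum_sub_distrib, ite_mul, Finset.sum_ite_eq']
  have hP := combo hX hm (fun w => (if w = s then (1:ℝ) else 0) + (if w = t then 1 else 0))
  simp only [hsumP] at hP
  have hM := combo hX hm (fun w => (if w = s then (1:ℝ) else 0) - (if w = t then 1 else 0))
  simp only [hsumM] at hM
  have hS := quartic_single hX hm s
  have hT := quartic_single hX hm t
  have iS2 := (hX2 s).integrable_sq
  have iT2 := (hX2 t).integrable_sq
  have iST := mul_integrable hX2 s t
  -- second moment expansions
  have eP2 : ∫ x, (X s x + X t x) ^ 2 ∂μ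
      = ∫ x, X s x ^ 2 ∂μ + (2 * ∫ x, X s x * X t x ∂μ + ∫ x, X t x ^ 2 ∂μ) := by
    have hpt : ∀ x : Ω, (X s x + X t x) ^ 2
        = X s x ^ 2 + (2 * (X s x * X t x) + X t x ^ 2) := fun x => by ring
    simp only [hpt]
    have ig1 : Integrable (fun x => 2 * (X s x * X t x) + X t x ^ 2) μ :=
      (iST.const_mul 2).add iT2
    rw [integral_add iS2 ig1, integral_add (iST.const_mul 2) iT2, integral_const_mul]
  have eM2 : ∫ x, (X s x - X t x) ^ 2 ∂μ
      = ∫ x, X s x ^ 2 ∂μ + ((-2) * ∫ x, X s x * X t x ∂μ + ∫ x, X t x ^ 2 ∂μ) := by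
    have hpt : ∀ x : Ω, (X s x - X t x) ^ 2
        = X s x ^ 2 + ((-2) * (X s x * X t x) + X t x ^ 2) := fun x => by ring
    simp only [hpt]
    have ig1 : Integrable (fun x => (-2) * (X s x * X t x) + X t x ^ 2) μ :=
      (iST.const_mul (-2)).add iT2
    rw [integral_add iS2 ig1, integral_add (iST.const_mul (-2)) iT2, integral_const_mul]
  -- quartic expansion
  have hpt : ∀ x : Ω, X s x ^ 2 * X t x ^ 2
      = (1/12) * ((X s x + X t x) ^ 4 + ((X s x - X t x) ^ 4
          + ((-2) * X s x ^ 4 + (-2) * X t x ^ 4))) := fun x => by ring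
  calc ∫ x, X s x ^ 2 * X t x ^ 2 ∂μ
      = ∫ x, (1/12) * ((X s x + X t x) ^ 4 + ((X s x - X t x) ^ 4
          + ((-2) * X s x ^ 4 + (-2) * X t x ^ 4))) ∂μ := by simp only [hpt]
    _ = (1/12) * (∫ x, (X s x + X t x) ^ 4 ∂μ + (∫ x, (X s x - X t x) ^ 4 ∂μ
          + ((-2) * ∫ x, X s x ^ 4 ∂μ + (-2) * ∫ x, X t x ^ 4 ∂μ))) := by
        have ig1 : Integrable (fun x => (-2) * X s x ^ 4 + (-2) * X t x ^ 4) μ :=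
          (hS.1.const_mul (-2)).add (hT.1.const_mul (-2))
        have ig2 : Integrable (fun x => (X s x - X t x) ^ 4
            + ((-2) * X s x ^ 4 + (-2) * X t x ^ 4)) μ := hM.2.1.add ig1
        rw [integral_const_mul, integral_add hP.2.1 ig2, integral_add hM.2.1 ig1,
          integral_add (hS.1.const_mul (-2)) (hT.1.const_mul (-2)),
          integral_const_mul, integral_const_mul]
    _ = _ := by
        rw [hP.2.2, hM.2.2, hS.2, hT.2, eP2, eM2]
        ring

end Main

end IsserlisAux

/-- Isserlis-type variance formula for quadratic forms of a jointly
Gaussian centered finite family. -/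
theorem variance_of_gaussian_quadratic_form
    {Ω : Type*} [MeasurableSpace Ω] (μ : Measure Ω) [IsProbabilityMeasure μ]
    {S : Type*} [Fintype S] [Nonempty S] (X : S → Ω → ℝ)
    (hX : IsJointlyGaussianCentered μ X)
    (hX2 : ∀ s, MemLp (X s) 2 μ)
    (a : S → ℝ) :
    ProbabilityTheory.variance (fun x => ∑ s, a s * (X s x) ^ 2) μ =
      2 * ∑ s, ∑ t, a s * a t * (∫ x, X s x * X t x ∂μ) ^ 2 := by
  classical
  have hm : ∀ s, AEStronglyMeasurable (X s) μ := fun s => (hX2 s).1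
  have hsqm : ∀ s, AEStronglyMeasurable (fun x => X s x ^ 2) μ := fun s => by
    simpa [sq] using (hm s).fun_mul (hm s)
  have hYmeas : AEStronglyMeasurable (fun x => ∑ s, a s * X s x ^ 2) μ :=
    Finset.aestronglyMeasurable_fun_sum _ fun s _ => (hsqm s).const_mul _
  have hpt : ∀ x : Ω, (∑ s, a s * X s x ^ 2) ^ 2
      = ∑ s, ∑ t, (a s * a t) * (X s x ^ 2 * X t x ^ 2) := by
    intro x
    rw [sq, Finset.sum_mul_sum]
    exact Finset.sum_congr rfl fun s _ => Finset.sum_congr rfl fun t _ => by ring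
  have iY2 : Integrable (fun x => (∑ s, a s * X s x ^ 2) ^ 2) μ := by
    simp only [hpt]
    exact integrable_finset_sum _ fun s _ => integrable_finset_sum _ fun t _ =>
      (sq_mul_sq_integrable hX hm s t).const_mul _
  have hY2 : MemLp (fun x => ∑ s, a s * X s x ^ 2) 2 μ :=
    (memLp_two_iff_integrable_sq hYmeas).mpr iY2
  rw [ProbabilityTheory.variance_eq_sub hY2]
  simp only [Pi.pow_apply]
  have hEY2 : ∫ x, (∑ s, a s * X s x ^ 2) ^ 2 ∂μ
      = ∑ s, ∑ t, (a s * a t) * ((∫ x, X s x ^ 2 ∂μ) * (∫ x, X t x ^ 2 ∂μ)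
          + 2 * (∫ x, X s x * X t x ∂μ) ^ 2) := by
    simp only [hpt]
    rw [integral_finset_sum _ fun s _ => integrable_finset_sum _ fun t _ =>
      (sq_mul_sq_integrable hX hm s t).const_mul _]
    refine Finset.sum_congr rfl fun s _ => ?_
    rw [integral_finset_sum _ fun t _ => (sq_mul_sq_integrable hX hm s t).const_mul _]
    refine Finset.sum_congr rfl fun t _ => ?_
    rw [integral_const_mul, pair_moment hX hX2 s t]
  have hEY : ∫ x, (∑ s, a s * X s x ^ 2) ∂μ = ∑ s, a s * ∫ x, X s x ^ 2 ∂μ := by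
    rw [integral_finset_sum _ fun s _ => ((hX2 s).integrable_sq.const_mul _)]
    exact Finset.sum_congr rfl fun s _ => integral_const_mul _ _
  rw [hEY2, hEY, sq, Finset.sum_mul_sum, Finset.mul_sum, ← Finset.sum_sub_distrib]
  refine Finset.sum_congr rfl fun s _ => ?_
  rw [Finset.mul_sum, ← Finset.sum_sub_distrib]
  refine Finset.sum_congr rfl fun t _ => ?_
  ring


end DSW
end
end
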